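/- Let l be a natural number and let S, T, W be subspaces of ℂ^{2l} with dim W ≤ 1. Then dim( ((P(T,S) ⊔ P(S,T))ᗮ ⊓ W) ⊔ α(S,T) ) ≤ l, where P(S,T) = (S ⊔ Tᗮ) ⊓ T and α(S,T) = P(T,S) ⊓ (S ⊓ T)ᗮ. -/

import Mathlib

set_option maxHeartbeats 1000000 in
/-- For subspaces `S, T, W` of `ℂ^{2l}` with `dim W ≤ 1`,
`dim(((P(T,S) ⊔ P(S,T))ᗮ ⊓ W) ⊔ α(S,T)) ≤ l`, where `P(S,T) = (S ⊔ Tᗮ) ⊓ T`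
and `α(S,T) = P(T,S) ⊓ (S ⊓ T)ᗮ`. -/
theorem stmt_11 (l : ℕ) (S T W : Submodule ℂ (EuclideanSpace ℂ (Fin (2 * l))))
    (hW : Module.finrank ℂ W ≤ 1) :
    Module.finrank ℂ
        (((((T ⊔ Sᗮ) ⊓ S) ⊔ ((S ⊔ Tᗮ) ⊓ T))ᗮ ⊓ W) ⊔ (((T ⊔ Sᗮ) ⊓ S) ⊓ (S ⊓ T)ᗮ) :
          Submodule ℂ (EuclideanSpace ℂ (Fin (2 * l)))) ≤ l := by
  classical
  have hE : Module.finrank ℂ (EuclideanSpace ℂ (Fin (2 * l))) = 2 * l :=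
    finrank_euclideanSpace_fin
  set PTS : Submodule ℂ (EuclideanSpace ℂ (Fin (2 * l))) := (T ⊔ Sᗮ) ⊓ S with hPTS
  set PST : Submodule ℂ (EuclideanSpace ℂ (Fin (2 * l))) := (S ⊔ Tᗮ) ⊓ T with hPST
  set Q : Submodule ℂ (EuclideanSpace ℂ (Fin (2 * l))) := PTS ⊔ PST with hQ
  set A : Submodule ℂ (EuclideanSpace ℂ (Fin (2 * l))) := PTS ⊓ (S ⊓ T)ᗮ with hA
  -- main sup bound
  have h1 : Module.finrank ℂ (Qᗮ ⊓ W ⊔ A : Submodule ℂ (EuclideanSpace ℂ (Fin (2 * l))))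
      ≤ Module.finrank ℂ (Qᗮ ⊓ W : Submodule ℂ (EuclideanSpace ℂ (Fin (2 * l))))
        + Module.finrank ℂ A := by
    have := Submodule.finrank_sup_add_finrank_inf_eq (Qᗮ ⊓ W) A
    omega
  have h2 : Module.finrank ℂ (Qᗮ ⊓ W : Submodule ℂ (EuclideanSpace ℂ (Fin (2 * l))))
      ≤ Module.finrank ℂ W := Submodule.finrank_mono inf_le_right
  have h3 : Module.finrank ℂ Q + Module.finrank ℂ Qᗮ
      = Module.finrank ℂ (EuclideanSpace ℂ (Fin (2 * l))) :=
    Q.finrank_add_finrank_orthogonal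
  have h4 : Module.finrank ℂ (Qᗮ ⊓ W : Submodule ℂ (EuclideanSpace ℂ (Fin (2 * l))))
      ≤ Module.finrank ℂ Qᗮ := Submodule.finrank_mono inf_le_left
  -- dim A + dim (S ⊓ T) ≤ dim PTS
  have hdisj : A ⊓ (S ⊓ T) = ⊥ :=
    disjoint_iff.mp (((S ⊓ T).orthogonal_disjoint.symm).mono inf_le_right le_rfl)
  have hST_le : S ⊓ T ≤ PTS := le_inf (le_trans inf_le_right le_sup_left) inf_le_left
  have h5 : Module.finrank ℂ A
      + Module.finrank ℂ (S ⊓ T : Submodule ℂ (EuclideanSpace ℂ (Fin (2 * l))))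
      ≤ Module.finrank ℂ PTS := by
    have heq := Submodule.finrank_sup_add_finrank_inf_eq A (S ⊓ T)
    rw [hdisj] at heq
    have hle : Module.finrank ℂ (A ⊔ (S ⊓ T) : Submodule ℂ (EuclideanSpace ℂ (Fin (2 * l))))
        ≤ Module.finrank ℂ PTS :=
      Submodule.finrank_mono (sup_le inf_le_left hST_le)
    simp only [finrank_bot, add_zero] at heq
    omega
  -- dim Q + dim (S ⊓ T) ≥ dim PTS + dim PST
  have h7 : Module.finrank ℂ Q
      + Module.finrank ℂ (PTS ⊓ PST : Submodule ℂ (EuclideanSpace ℂ (Fin (2 * l))))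
      = Module.finrank ℂ PTS + Module.finrank ℂ PST :=
    Submodule.finrank_sup_add_finrank_inf_eq PTS PST
  have h8 : Module.finrank ℂ (PTS ⊓ PST : Submodule ℂ (EuclideanSpace ℂ (Fin (2 * l))))
      ≤ Module.finrank ℂ (S ⊓ T : Submodule ℂ (EuclideanSpace ℂ (Fin (2 * l)))) :=
    Submodule.finrank_mono (le_inf (le_trans inf_le_left inf_le_right)
      (le_trans inf_le_right inf_le_right))
  -- dim PST = dim PTS, via a dimension count
  have key : ∀ U V : Submodule ℂ (EuclideanSpace ℂ (Fin (2 * l))),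
      Module.finrank ℂ ((U ⊔ Vᗮ) ⊓ V : Submodule ℂ (EuclideanSpace ℂ (Fin (2 * l))))
        + Module.finrank ℂ (Uᗮ ⊓ V : Submodule ℂ (EuclideanSpace ℂ (Fin (2 * l))))
        = Module.finrank ℂ V := by
    intro U V
    have e1 := Submodule.finrank_sup_add_finrank_inf_eq (U ⊔ Vᗮ) V
    have etop : ((U ⊔ Vᗮ) ⊔ V : Submodule ℂ (EuclideanSpace ℂ (Fin (2 * l)))) = ⊤ := by
      have hsup : V ⊔ Vᗮ = ⊤ := Submodule.sup_orthogonal_of_hasOrthogonalProjection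
      rw [eq_top_iff, ← hsup]
      exact sup_le le_sup_right (le_trans le_sup_right le_sup_left)
    rw [etop] at e1
    have etop' : Module.finrank ℂ (⊤ : Submodule ℂ (EuclideanSpace ℂ (Fin (2 * l)))) = 2 * l := by
      rw [finrank_top]; exact hE
    have e2 := Submodule.finrank_sup_add_finrank_inf_eq U Vᗮ
    have e3 : Module.finrank ℂ V + Module.finrank ℂ Vᗮ
        = Module.finrank ℂ (EuclideanSpace ℂ (Fin (2 * l))) :=
      V.finrank_add_finrank_orthogonal
    have e4 : Module.finrank ℂ (U ⊓ Vᗮ : Submodule ℂ (EuclideanSpace ℂ (Fin (2 * l))))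
        + Module.finrank ℂ (Uᗮ ⊔ V : Submodule ℂ (EuclideanSpace ℂ (Fin (2 * l)))) = 2 * l := by
      have eorth : ((Uᗮ ⊔ V)ᗮ : Submodule ℂ (EuclideanSpace ℂ (Fin (2 * l)))) = U ⊓ Vᗮ := by
        rw [← Submodule.inf_orthogonal, Submodule.orthogonal_orthogonal]
      have h := (Uᗮ ⊔ V).finrank_add_finrank_orthogonal
      rw [eorth, hE] at h
      omega
    have e5 := Submodule.finrank_sup_add_finrank_inf_eq Uᗮ V
    have e6 : Module.finrank ℂ U + Module.finrank ℂ Uᗮ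
        = Module.finrank ℂ (EuclideanSpace ℂ (Fin (2 * l))) :=
      U.finrank_add_finrank_orthogonal
    have e7 : Module.finrank ℂ ((U ⊔ Vᗮ) ⊓ V : Submodule ℂ (EuclideanSpace ℂ (Fin (2 * l))))
        ≤ Module.finrank ℂ V := Submodule.finrank_mono inf_le_right
    have e8 : Module.finrank ℂ (Uᗮ ⊓ V : Submodule ℂ (EuclideanSpace ℂ (Fin (2 * l))))
        ≤ Module.finrank ℂ V := Submodule.finrank_mono inf_le_right
    omega
  have k1 := key S T
  have k2 := key T S
  rw [← hPST] at k1
  rw [← hPTS] at k2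
  have k3 : Module.finrank ℂ (Sᗮ ⊓ T : Submodule ℂ (EuclideanSpace ℂ (Fin (2 * l))))
      + Module.finrank ℂ (S ⊔ Tᗮ : Submodule ℂ (EuclideanSpace ℂ (Fin (2 * l)))) = 2 * l := by
    have eorth : ((S ⊔ Tᗮ)ᗮ : Submodule ℂ (EuclideanSpace ℂ (Fin (2 * l)))) = Sᗮ ⊓ T := by
      rw [← Submodule.inf_orthogonal, Submodule.orthogonal_orthogonal]
    have h := (S ⊔ Tᗮ).finrank_add_finrank_orthogonal
    rw [eorth, hE] at h
    omega
  have k4 : Module.finrank ℂ (Tᗮ ⊓ S : Submodule ℂ (EuclideanSpace ℂ (Fin (2 * l))))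
      = Module.finrank ℂ (S ⊓ Tᗮ : Submodule ℂ (EuclideanSpace ℂ (Fin (2 * l)))) := by
    rw [inf_comm]
  have k6 := Submodule.finrank_sup_add_finrank_inf_eq S Tᗮ
  have k7 : Module.finrank ℂ T + Module.finrank ℂ Tᗮ
      = Module.finrank ℂ (EuclideanSpace ℂ (Fin (2 * l))) :=
    T.finrank_add_finrank_orthogonal
  -- wrap up with arithmetic
  omega
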